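/- Let n ≥ 0 and k ≥ 1, and let 2n+1 = p_0 + p_1 + ⋯ + p_{k−1} be a composition of 2n+1 into k positive odd parts. For j = 1,…,k set q_j := p_0 + ⋯ + p_{j−1} and let Q := {q_1, …, q_k} ⊆ {1, …, 2n+1}. Define, for i = 0,…,2n: f_i(z) := z/k if i+1 ∈ Q and f_i(z) := 0 otherwise; α_i := 1/k if i+1 ∈ Q and α_i := 0 otherwise. Then (f_0,…,f_{2n} | α_0,…,α_{2n}) is a solution of the A_{2n}-Painlevé system satisfying the normalizations f_0(z) + ⋯ + f_{2n}(z) = z and α_0 + ⋯ + α_{2n} = 1. -/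

import Mathlib

lemma mod_small' (x N : ℕ) (h : x < 2*N) :
    x % N = if x < N then x else x - N := by
  split
  · exact Nat.mod_eq_of_lt ‹_›
  · rw [Nat.mod_eq_sub_mod (by omega), Nat.mod_eq_of_lt (by omega)]

lemma key_count (n k : ℕ) (q : ℕ → ℕ)
    (hmono : ∀ a b, a < b → b < k → q a < q b)
    (hpar : ∀ j < k, q j % 2 = (j+1) % 2)
    (hub : ∀ j < k, q j ≤ 2*n+1)
    (hlb : ∀ j < k, 1 ≤ q j)
    (hk : 0 < k) (hkodd : k % 2 = 1)
    (i m : ℕ) (hi : i < 2*n+1) (hm : m < k) (him : q m = i + 1)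
    (r : ℕ) (hr : r = 1 ∨ r = 2) :
    ((Finset.range n).filter (fun j => ∃ t < k, q t = (i + (2*j+r)) % (2*n+1) + 1)).card
      = ((Finset.range (k-1)).filter (fun t => (t + r) % 2 = 1)).card := by
  set N := 2*n+1 with hN
  have hinj : ∀ a b, a < k → b < k → q a = q b → a = b := by
    intro a b ha hb hab
    rcases lt_trichotomy a b with h | h | h
    · exact absurd hab (Nat.ne_of_lt (hmono a b h hb))
    · exact h
    · exact absurd hab.symm (Nat.ne_of_lt (hmono b a h ha))
  -- the map: circular position t ↦ index jmap t in Q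
  set jm : ℕ → ℕ := fun t => (m + t + 1) % k with hjm
  set σ : ℕ → ℕ := fun t => (q (jm t) + N - q m) % N with hσdef
  have hNpos : 0 < N := by omega
  -- basic facts about jm, σ for t < k-1
  have hjmlt : ∀ t, jm t < k := fun t => Nat.mod_lt _ hk
  have hjmval : ∀ t < k-1, (m + t + 1 < k ∧ jm t = m + t + 1) ∨
      (m + t + 1 ≥ k ∧ jm t = m + t + 1 - k) := by
    intro t ht
    have := mod_small' (m + t + 1) k (by omega)
    simp only [hjm]
    split at this <;> omega
  have hjmne : ∀ t < k-1, jm t ≠ m := by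
    intro t ht h
    rcases hjmval t ht with ⟨h1, h2⟩ | ⟨h1, h2⟩ <;> omega
  have hσfact : ∀ t < k-1, (1 ≤ σ t ∧ σ t ≤ 2*n) ∧ σ t % 2 = (t+1) % 2 ∧
      (i + σ t) % N + 1 = q (jm t) := by
    intro t ht
    have hj := hjmlt t
    have hqne : q (jm t) ≠ q m := fun h => (hjmne t ht) (hinj _ _ hj hm h)
    have hub1 := hub (jm t) hj
    have hlb1 := hlb (jm t) hj
    have hub2 := hub m hm
    have hlb2 := hlb m hm
    have hp1 := hpar (jm t) hj
    have hp2 := hpar m hm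
    have hσval := mod_small' (q (jm t) + N - q m) N (by omega)
    have hσv : σ t = if q (jm t) + N - q m < N then q (jm t) + N - q m
        else q (jm t) + N - q m - N := by rw [hσdef]; exact hσval
    have hσeq : (q m < q (jm t) ∧ σ t = q (jm t) - q m) ∨
        (q (jm t) < q m ∧ σ t = q (jm t) + N - q m) := by
      split at hσv <;> omega
    have hbounds : 1 ≤ σ t ∧ σ t ≤ 2*n := by rcases hσeq with ⟨h1,h2⟩|⟨h1,h2⟩ <;> omega
    have hparσ : σ t % 2 = (t+1) % 2 := by
      rcases hjmval t ht with ⟨h1, h2⟩ | ⟨h1, h2⟩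
      · have := hmono m (jm t) (by omega) (hjmlt t)
        rcases hσeq with ⟨h3, h4⟩ | ⟨h3, h4⟩ <;> omega
      · have := hmono (jm t) m (by omega) hm
        rcases hσeq with ⟨h3, h4⟩ | ⟨h3, h4⟩ <;> omega
    refine ⟨hbounds, hparσ, ?_⟩
    have hmod := mod_small' (i + σ t) N (by omega)
    rcases hσeq with ⟨h1, h2⟩ | ⟨h1, h2⟩ <;>
      · rw [hmod]; split <;> omega
  -- σ is injective (via q and jm)
  have hσinj : ∀ t1 t2, t1 < k-1 → t2 < k-1 → σ t1 = σ t2 → t1 = t2 := by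
    intro t1 t2 h1 h2 h
    have f1 := (hσfact t1 h1).2.2
    have f2 := (hσfact t2 h2).2.2
    have : q (jm t1) = q (jm t2) := by rw [← f1, ← f2, h]
    have hje : jm t1 = jm t2 := hinj _ _ (hjmlt t1) (hjmlt t2) this
    rcases hjmval t1 h1 with ⟨a1, b1⟩ | ⟨a1, b1⟩ <;>
      rcases hjmval t2 h2 with ⟨a2, b2⟩ | ⟨a2, b2⟩ <;> omega
  refine (Finset.card_bij (fun t _ => (σ t - r)/2) ?_ ?_ ?_).symm
  · -- maps into the left filter
    intro t ht
    simp only [Finset.mem_filter, Finset.mem_range] at ht ⊢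
    obtain ⟨ht1, ht2⟩ := ht
    obtain ⟨⟨hb1, hb2⟩, hp, hmem⟩ := hσfact t ht1
    have hσr : 2 * ((σ t - r)/2) + r = σ t := by omega
    constructor
    · omega
    · exact ⟨jm t, hjmlt t, by rw [← hmem, hσr]⟩
  · -- injective
    intro t1 h1 t2 h2 h
    have h' : (σ t1 - r)/2 = (σ t2 - r)/2 := h
    clear h
    simp only [Finset.mem_filter, Finset.mem_range] at h1 h2
    obtain ⟨⟨c1, c2⟩, d1, _⟩ := hσfact t1 h1.1
    obtain ⟨⟨c3, c4⟩, d2, _⟩ := hσfact t2 h2.1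
    have : σ t1 = σ t2 := by omega
    exact hσinj t1 t2 h1.1 h2.1 this
  · -- surjective
    intro j hj
    simp only [Finset.mem_filter, Finset.mem_range] at hj
    obtain ⟨hjn, t', ht', hqt'⟩ := hj
    have hmodv := mod_small' (i + (2*j+r)) N (by omega)
    have hxv : (i + (2*j+r)) % N = if i + (2*j+r) < N then i + (2*j+r)
        else i + (2*j+r) - N := hmodv
    have hub1 := hub t' ht'
    have hlb1 := hlb t' ht'
    have hp1 := hpar t' ht'
    have hp2 := hpar m hm
    have ht'm : t' ≠ m := by
      intro h; subst h
      rw [him] at hqt'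
      split at hxv <;> omega
    -- define t
    have hex : ∃ t, t < k - 1 ∧ jm t = t' := by
      rcases Nat.lt_or_ge m t' with hmt | hmt
      · refine ⟨t' - m - 1, by omega, ?_⟩
        have he : m + (t' - m - 1) + 1 = t' := by omega
        simp only [hjm]
        rw [he, Nat.mod_eq_of_lt ht']
      · have hlt : t' < m := by omega
        refine ⟨t' + k - m - 1, by omega, ?_⟩
        have he : m + (t' + k - m - 1) + 1 = t' + k := by omega
        simp only [hjm]
        rw [he, Nat.add_mod_right, Nat.mod_eq_of_lt ht']
    obtain ⟨t, htk, hjmt⟩ := hex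
    refine ⟨t, ?_, ?_⟩
    · -- t is in the right filter: need σ t = 2*j + r first
      obtain ⟨⟨hb1, hb2⟩, hp, hmem⟩ := hσfact t htk
      rw [hjmt, hqt'] at hmem
      -- hmem : (i + σ t) % N + 1 = (i + (2*j+r)) % N + 1
      have hσt : σ t = 2*j + r := by
        have e1 := mod_small' (i + σ t) N (by omega)
        split at e1 <;> split at hxv <;> omega
      simp only [Finset.mem_filter, Finset.mem_range]
      exact ⟨htk, by omega⟩
    · -- value maps back to j
      show (σ t - r)/2 = j
      obtain ⟨⟨hb1, hb2⟩, hp, hmem⟩ := hσfact t htk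
      rw [hjmt, hqt'] at hmem
      have hσt : σ t = 2*j + r := by
        have e1 := mod_small' (i + σ t) N (by omega)
        split at e1 <;> split at hxv <;> omega
      omega

lemma evens_eq_odds (m : ℕ) :
    ((Finset.range (2*m)).filter (fun t => (t+1) % 2 = 1)).card
      = ((Finset.range (2*m)).filter (fun t => (t+2) % 2 = 1)).card := by
  induction m with
  | zero => simp
  | succ m ih =>
      have h1 : 2*(m+1) = (2*m+1)+1 := by ring
      rw [h1, Finset.range_add_one, Finset.range_add_one, Finset.filter_insert,
        Finset.filter_insert, Finset.filter_insert, Finset.filter_insert]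
      have e1 : ((2*m)+1) % 2 = 1 := by omega
      have e2 : ((2*m)+2) % 2 ≠ 1 := by omega
      have e3 : ((2*m+1)+1) % 2 ≠ 1 := by omega
      have e4 : ((2*m+1)+2) % 2 = 1 := by omega
      simp only [if_neg e2, if_neg e3, if_pos e1, if_pos e4]
      rw [Finset.card_insert_of_notMem (by simp), Finset.card_insert_of_notMem (by simp [Finset.mem_filter])]
      omega


/-- Seed solutions of the `A_{2n}`-Painlevé system.  Given a composition
`2n+1 = p_0 + ⋯ + p_{k−1}` into `k` positive odd parts, with partial sums
`q_j = p_0 + ⋯ + p_{j−1}` forming the set `Q = {q_1, …, q_k}`, the tuple defined by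
`f_i(z) = z/k`, `α_i = 1/k` if `i+1 ∈ Q` and `f_i = 0`, `α_i = 0` otherwise is a solution
of the `A_{2n}`-Painlevé system with its normalizations `Σ f_i = z` and `Σ α_i = 1`. -/
theorem seed_solution_painleve (n k : ℕ) (hk : 1 ≤ k)
    (p : ℕ → ℕ)
    (hodd : ∀ j < k, Odd (p j))
    (hpos : ∀ j < k, 0 < p j)
    (hsum : ∑ j ∈ Finset.range k, p j = 2 * n + 1)
    (Q : Finset ℕ)
    (hQ : Q = (Finset.range k).image (fun j => ∑ t ∈ Finset.range (j + 1), p t))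
    (f : Fin (2 * n + 1) → ℂ → ℂ) (α : Fin (2 * n + 1) → ℂ)
    (hf : ∀ (i : Fin (2 * n + 1)) (z : ℂ),
      f i z = if (i : ℕ) + 1 ∈ Q then z / (k : ℂ) else 0)
    (hα : ∀ i : Fin (2 * n + 1),
      α i = if (i : ℕ) + 1 ∈ Q then 1 / (k : ℂ) else 0) :
    (∀ (i : Fin (2 * n + 1)) (z : ℂ),
      deriv (f i) z + f i z *
        ((∑ j ∈ Finset.range n, f (i + (Fin.ofNat (2 * n + 1) (2 * j + 1 : ℕ))) z) -
         (∑ j ∈ Finset.range n, f (i + (Fin.ofNat (2 * n + 1) (2 * j + 2 : ℕ))) z)) = α i) ∧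
    (∀ z : ℂ, ∑ i, f i z = z) ∧
    (∑ i, α i = 1) := by
  set qf : ℕ → ℕ := fun j => ∑ t ∈ Finset.range (j + 1), p t with hqf
  -- basic facts about qf
  have hmono : ∀ a b, a < b → b < k → qf a < qf b := by
    intro a b hab hbk
    apply Finset.sum_lt_sum_of_subset (Finset.range_subset_range.mpr (by omega))
      (i := a + 1) (by simp only [Finset.mem_range]; omega) (by simp only [Finset.mem_range]; omega) (hpos (a+1) (by omega))
    intro j _ _; exact Nat.zero_le _
  have hinj : ∀ a b, a < k → b < k → qf a = qf b → a = b := by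
    intro a b ha hb hab
    rcases lt_trichotomy a b with h | h | h
    · exact absurd hab (Nat.ne_of_lt (hmono a b h hb))
    · exact h
    · exact absurd hab.symm (Nat.ne_of_lt (hmono b a h ha))
  have hpar : ∀ j < k, qf j % 2 = (j+1) % 2 := by
    intro j hj
    induction j with
    | zero =>
        have h0 := hodd 0 (by omega)
        rw [Nat.odd_iff] at h0
        simp only [hqf]
        rw [Finset.sum_range_one]
        omega
    | succ j ih =>
        have h1 := ih (by omega)
        have h2 := hodd (j+1) hj
        have h3 : qf (j+1) = qf j + p (j+1) := Finset.sum_range_succ p (j+1)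
        rw [Nat.odd_iff] at h2
        omega
  have hub : ∀ j < k, qf j ≤ (2*n+1) := by
    intro j hj
    rw [← hsum]
    exact Finset.sum_le_sum_of_subset (Finset.range_subset_range.mpr (by omega))
  have hlb : ∀ j < k, 1 ≤ qf j := by
    intro j hj
    calc 1 ≤ p 0 := hpos 0 (by omega)
    _ ≤ qf j := Finset.single_le_sum (f := p) (fun _ _ => Nat.zero_le _) (by simp)
  have hlast : qf (k-1) = (2*n+1) := by
    simp only [hqf]
    rw [Nat.sub_add_cancel hk]; exact hsum
  have hkodd : k % 2 = 1 := by
    have h1 := hpar (k-1) (by omega)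
    rw [hlast] at h1
    omega
  have hQmem : ∀ x, x ∈ Q ↔ ∃ t < k, qf t = x := by
    intro x
    simp [hQ, Finset.mem_image, Finset.mem_range, hqf]
  have hkC : (k : ℂ) ≠ 0 := Nat.cast_ne_zero.mpr (by omega)
  -- cardinality of Q-positions in Fin (2*n+1)
  have hQcard : Q.card = k := by
    rw [hQ, Finset.card_image_of_injOn, Finset.card_range]
    intro a ha b hb h
    simp only [Finset.mem_coe, Finset.mem_range] at ha hb
    exact hinj a b ha hb h
  have hfiltcard : (Finset.univ.filter (fun i : Fin (2*n+1) => (i : ℕ) + 1 ∈ Q)).card = k := by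
    rw [← hQcard]
    refine Finset.card_bij (fun (i : Fin (2*n+1)) (_ : i ∈ Finset.univ.filter (fun i : Fin (2*n+1) => (i : ℕ) + 1 ∈ Q)) => (i : ℕ) + 1) ?_ ?_ ?_
    · intro a ha; simp only [Finset.mem_filter] at ha; exact ha.2
    · intro a _ b _ h
      have h' : (a : ℕ) + 1 = (b : ℕ) + 1 := h
      exact Fin.val_injective (by omega)
    · intro x hx
      obtain ⟨t, ht, hqt⟩ := (hQmem x).mp hx
      have h1 := hlb t ht
      have h2 := hub t ht
      refine ⟨⟨x - 1, by omega⟩, ?_, by simp; omega⟩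
      simp only [Finset.mem_filter, Finset.mem_univ, true_and]
      have : x - 1 + 1 = x := by omega
      simpa [this] using hx
  -- the generic sum computation
  have hsumite : ∀ (z c : ℂ) (s : Finset ℕ) (P : ℕ → Prop) [DecidablePred P],
      ∑ j ∈ s, (if P j then c else 0) = (s.filter P).card • c := by
    intro z c s P _
    rw [← Finset.sum_filter, Finset.sum_const]
  refine ⟨?_, ?_, ?_⟩
  · -- the main equation
    intro i z
    by_cases hc : (i : ℕ) + 1 ∈ Q
    · -- seed index
      obtain ⟨m, hm, hqm⟩ := (hQmem _).mp hc
      have hfi : f i = fun w => w / (k : ℂ) := by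
        funext w; rw [hf i w, if_pos hc]
      have hderiv : deriv (f i) z = 1 / (k : ℂ) := by
        rw [hfi, deriv_div_const, deriv_id'']
      -- rewrite the shifted terms
      have hterm : ∀ (c : ℕ),
          f (i + Fin.ofNat (2*n+1) c) z = if ((i : ℕ) + c) % (2*n+1) + 1 ∈ Q then z / (k : ℂ) else 0 := by
        intro c
        have hval : (i + Fin.ofNat (2*n+1) c).val = ((i:ℕ) + c) % (2*n+1) := by
          rw [Fin.add_def]
          simp [Fin.val_ofNat, Nat.add_mod, Nat.mod_eq_of_lt i.isLt]
        rw [hf, hval]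
      have hS1 : (∑ j ∈ Finset.range n, f (i + (Fin.ofNat (2 * n + 1) (2 * j + 1 : ℕ))) z)
          = ((Finset.range n).filter
              (fun j => ∃ t < k, qf t = ((i:ℕ) + (2*j+1)) % (2*n+1) + 1)).card • (z / (k:ℂ)) := by
        rw [← hsumite z]
        apply Finset.sum_congr rfl
        intro j _
        rw [hterm (2*j+1)]
        congr 1
        simp only [eq_iff_iff]
        rw [hQmem]
      have hS2 : (∑ j ∈ Finset.range n, f (i + (Fin.ofNat (2 * n + 1) (2 * j + 2 : ℕ))) z)
          = ((Finset.range n).filter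
              (fun j => ∃ t < k, qf t = ((i:ℕ) + (2*j+2)) % (2*n+1) + 1)).card • (z / (k:ℂ)) := by
        rw [← hsumite z]
        apply Finset.sum_congr rfl
        intro j _
        rw [hterm (2*j+2)]
        congr 1
        simp only [eq_iff_iff]
        rw [hQmem]
      have hc1 := key_count n k qf hmono hpar hub hlb (by omega) hkodd
        (i : ℕ) m i.isLt hm hqm 1 (Or.inl rfl)
      have hc2 := key_count n k qf hmono hpar hub hlb (by omega) hkodd
        (i : ℕ) m i.isLt hm hqm 2 (Or.inr rfl)
      have hcodd : k - 1 = 2 * ((k-1)/2) := by omega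
      have heq : ((Finset.range n).filter
              (fun j => ∃ t < k, qf t = ((i:ℕ) + (2*j+1)) % (2*n+1) + 1)).card
          = ((Finset.range n).filter
              (fun j => ∃ t < k, qf t = ((i:ℕ) + (2*j+2)) % (2*n+1) + 1)).card := by
        rw [hc1, hc2, hcodd]
        exact evens_eq_odds ((k-1)/2)
      rw [hderiv, hS1, hS2, heq, hα, if_pos hc, hfi]
      ring
    · -- non-seed index
      have hfi : f i = fun _ => (0 : ℂ) := by
        funext w; rw [hf i w, if_neg hc]
      rw [hfi, hα, if_neg hc]
      simp
  · -- sum of f equals z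
    intro z
    have : ∑ i : Fin (2*n+1), f i z = ∑ i : Fin (2*n+1), (if (i : ℕ) + 1 ∈ Q then z / (k:ℂ) else 0) :=
      Finset.sum_congr rfl (fun i _ => hf i z)
    rw [this, ← Finset.sum_filter, Finset.sum_const, hfiltcard, nsmul_eq_mul,
      mul_div_cancel₀ _ hkC]
  · -- sum of α equals 1
    have : ∑ i : Fin (2*n+1), α i = ∑ i : Fin (2*n+1), (if (i : ℕ) + 1 ∈ Q then 1 / (k:ℂ) else 0) :=
      Finset.sum_congr rfl (fun i _ => hα i)
    rw [this, ← Finset.sum_filter, Finset.sum_const, hfiltcard, nsmul_eq_mul,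
      mul_one_div, div_self hkC]
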